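/- Let ϑ be a finite compactly supported nonnegative Borel measure on ℝ, let u : [0,1] → [−1, 1] be measurable, and set a(t) := ∫₀ᵗ u(s) ds. Define the measures μ_t := e^{−a(t)} · (x ↦ x + a(t))_♯ ϑ on ℝ. Then for every continuously differentiable φ : ℝ → ℝ with bounded derivative, the map t ↦ ∫ φ dμ_t is Lipschitz (in particular absolutely continuous) on [0,1], and for almost every t ∈ [0,1]: (d/dt) ∫ φ dμ_t = u(t) · ∫ φ' dμ_t − u(t) · ∫ φ dμ_t. In other words, μ is a distributional solution of the balance law ∂_t μ + u_t ∂_x μ = −u_t μ with μ₀ = ϑ. -/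

import Mathlib

open MeasureTheory Set Filter Metric Topology

private lemma ftc_ae (v : ℝ → ℝ) (hv : Integrable v) :
    ∀ᵐ t : ℝ, HasDerivAt (fun t => ∫ r in (0:ℝ)..t, v r) (v t) t := by
  filter_upwards [IsUnifLocDoublingMeasure.ae_tendsto_average_norm_sub (μ := volume)
    hv.locallyIntegrable 1] with t ht
  rw [hasDerivAt_iff_tendsto_slope]
  set A : ℝ → ℝ := fun t => ∫ r in (0:ℝ)..t, v r with hA
  have hδ : Tendsto (fun s : ℝ => |s - t|) (𝓝[≠] t) (𝓝[>] 0) := by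
    rw [tendsto_nhdsWithin_iff]
    constructor
    · have : Tendsto (fun s : ℝ => |s - t|) (𝓝 t) (𝓝 |t - t|) :=
        (continuous_abs.comp (continuous_id.sub continuous_const)).tendsto t
      simpa using this.mono_left nhdsWithin_le_nhds
    · exact eventually_mem_nhdsWithin.mono fun s hs => abs_pos.2 (sub_ne_zero.2 hs)
  have hmem : ∀ᶠ s : ℝ in 𝓝[≠] t, t ∈ closedBall t (1 * |s - t|) := by
    refine Eventually.of_forall fun s => ?_
    simp [mem_closedBall_self, abs_nonneg]
  have hb := (ht (fun _ : ℝ => t) (fun s => |s - t|) hδ hmem).const_mul (2:ℝ)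
  rw [mul_zero] at hb
  rw [tendsto_iff_dist_tendsto_zero]
  refine squeeze_zero' (Eventually.of_forall fun s => dist_nonneg) ?_ hb
  refine eventually_mem_nhdsWithin.mono fun s hs => ?_
  have hst : s ≠ t := hs
  have hr : (0:ℝ) < |s - t| := abs_pos.2 (sub_ne_zero.2 hst)
  have hAst : A s - A t = ∫ r in t..s, v r := by
    simpa using intervalIntegral.integral_interval_sub_left
      hv.intervalIntegrable hv.intervalIntegrable
  have key : (∫ r in t..s, (v r - v t)) = A s - A t - (s - t) * v t := by
    rw [intervalIntegral.integral_sub hv.intervalIntegrable intervalIntegrable_const,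
      intervalIntegral.integral_const, smul_eq_mul, ← hAst]
  have h1 : dist (slope A t s) (v t) = ‖∫ r in t..s, (v r - v t)‖ / |s - t| := by
    rw [Real.dist_eq, slope_def_field, Real.norm_eq_abs, key]
    have h0 : s - t ≠ 0 := sub_ne_zero.2 hst
    have heq : (A s - A t) / (s - t) - v t = (A s - A t - (s - t) * v t) / (s - t) := by
      field_simp
    rw [heq, abs_div]
  rw [h1]
  have h2 : ‖∫ r in t..s, (v r - v t)‖ ≤ ∫ r in closedBall t |s - t|, ‖v r - v t‖ := by
    refine intervalIntegral.norm_integral_le_integral_norm_uIoc.trans ?_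
    refine setIntegral_mono_set
      ((hv.integrableOn.sub (integrableOn_const measure_closedBall_lt_top.ne)).norm)
      ?_ ?_
    · exact Eventually.of_forall fun r => norm_nonneg _
    · refine HasSubset.Subset.eventuallyLE ?_
      intro r hr'
      rw [Real.closedBall_eq_Icc]
      rcases le_total t s with h | h
      · rw [uIoc_of_le h] at hr'
        constructor
        · have := hr'.1.le; have h2 := abs_nonneg (s - t); nlinarith [neg_abs_le (s - t)]
        · have := hr'.2; have : r - t ≤ |s - t| := by
            rw [abs_of_nonneg (sub_nonneg.2 h)]; linarith [hr'.2]
          linarith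
      · rw [uIoc_of_ge h] at hr'
        constructor
        · have : t - r ≤ |s - t| := by
            rw [abs_of_nonpos (sub_nonpos.2 h)]; linarith [hr'.1.le]
          linarith
        · linarith [hr'.2, abs_nonneg (s - t)]
  have h3 : ∫ r in closedBall t |s - t|, ‖v r - v t‖
      = 2 * |s - t| * ⨍ r in closedBall t |s - t|, ‖v r - v t‖ := by
    rw [setAverage_eq, smul_eq_mul]
    rw [Real.volume_real_closedBall (by positivity)]
    field_simp
  calc ‖∫ r in t..s, (v r - v t)‖ / |s - t|
      ≤ (2 * |s - t| * ⨍ r in closedBall t |s - t|, ‖v r - v t‖) / |s - t| := by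
        rw [← h3]; gcongr
    _ = 2 * ⨍ r in closedBall t |s - t|, ‖v r - v t‖ := by field_simp


/-- The explicit family `μ_t = e^{−a(t)} (x ↦ x + a(t))_♯ ϑ`, with
`a(t) = ∫₀ᵗ u(s) ds` and `|u| ≤ 1`, is a distributional solution of the balance law
`∂_t μ + u_t ∂_x μ = −u_t μ`, `μ_0 = ϑ`: for every `C¹` test function `φ` with bounded
derivative, `t ↦ ∫ φ dμ_t` is Lipschitz on `[0,1]` and for a.e. `t ∈ [0,1]` its
derivative equals `u(t) ∫ φ' dμ_t − u(t) ∫ φ dμ_t`. -/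
theorem stmt9 (ϑ : Measure ℝ) [IsFiniteMeasure ϑ]
    (hϑ_supp : ∃ K, IsCompact K ∧ ϑ Kᶜ = 0)
    (u : ℝ → ℝ) (hu_meas : Measurable u)
    (hu_bdd : ∀ t ∈ Icc (0:ℝ) 1, u t ∈ Icc (-1:ℝ) 1)
    (a : ℝ → ℝ) (ha : ∀ t, a t = ∫ s in (0:ℝ)..t, u s)
    (μ : ℝ → Measure ℝ)
    (hμ : ∀ t, μ t = ENNReal.ofReal (Real.exp (-a t)) • ϑ.map (fun x => x + a t)) :
    ∀ φ : ℝ → ℝ, ContDiff ℝ 1 φ → (∃ C, ∀ x, |deriv φ x| ≤ C) →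
      (∃ C : NNReal, LipschitzOnWith C (fun t => ∫ x, φ x ∂μ t) (Icc (0:ℝ) 1)) ∧
      ∀ᵐ t ∂(volume.restrict (Icc (0:ℝ) 1)),
        HasDerivAt (fun t => ∫ x, φ x ∂μ t)
          (u t * (∫ x, deriv φ x ∂μ t) - u t * ∫ x, φ x ∂μ t) t := by
  obtain ⟨K, hKcomp, hKnull⟩ := hϑ_supp
  rintro φ hφ ⟨C, hC⟩
  -- preliminaries
  have hC0 : 0 ≤ C := (abs_nonneg _).trans (hC 0)
  have hφd : Differentiable ℝ φ := hφ.differentiable one_ne_zero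
  have hφc : Continuous φ := hφ.continuous
  have hφ'c : Continuous (deriv φ) := hφ.continuous_deriv le_rfl
  have hφlip : LipschitzWith ⟨C, hC0⟩ φ := by
    refine lipschitzWith_of_nnnorm_deriv_le hφd fun x => ?_
    change ‖deriv φ x‖ ≤ C; rw [Real.norm_eq_abs]
    exact hC x
  have hK_ae : ∀ᵐ x ∂ϑ, x ∈ K := by
    rw [ae_iff]
    exact hKnull
  obtain ⟨R, hR⟩ := hKcomp.isBounded.subset_closedBall 0
  have hxR : ∀ x ∈ K, |x| ≤ |R| := by
    intro x hx
    have := hR hx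
    rw [mem_closedBall, Real.dist_eq, sub_zero] at this
    exact this.trans (le_abs_self R)
  set M : ℝ := |φ 0| + C * (|R| + 1) with hM
  have hφbd : ∀ b : ℝ, |b| ≤ 1 → ∀ x ∈ K, |φ (x + b)| ≤ M := by
    intro b hb x hx
    have h1 := hφlip.dist_le_mul (x + b) 0
    rw [Real.dist_eq, Real.dist_eq, sub_zero] at h1
    have h2 : |x + b| ≤ |R| + 1 := (abs_add_le x b).trans (by linarith [hxR x hx])
    have h3 : |φ (x + b)| ≤ |φ 0| + |φ (x + b) - φ 0| := by
      nlinarith [abs_sub_abs_le_abs_sub (φ (x + b)) (φ 0)]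
    change _ ≤ C * _ at h1
    nlinarith
  -- integrability
  have hint_φ : ∀ b : ℝ, |b| ≤ 1 → Integrable (fun x => φ (x + b)) ϑ := by
    intro b hb
    refine ⟨(hφc.comp (continuous_id.add continuous_const)).aestronglyMeasurable, ?_⟩
    refine HasFiniteIntegral.of_bounded (C := M) ?_
    filter_upwards [hK_ae] with x hx
    rw [Real.norm_eq_abs]
    exact hφbd b hb x hx
  have hint_φ_all : ∀ b : ℝ, Integrable (fun x => φ (x + b)) ϑ := by
    intro b
    refine ⟨(hφc.comp (continuous_id.add continuous_const)).aestronglyMeasurable, ?_⟩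
    refine HasFiniteIntegral.of_bounded (C := |φ 0| + C * (|R| + |b|)) ?_
    filter_upwards [hK_ae] with x hx
    have h1 := hφlip.dist_le_mul (x + b) 0
    rw [Real.dist_eq, Real.dist_eq, sub_zero] at h1
    change _ ≤ C * _ at h1
    have h2 : |x + b| ≤ |R| + |b| := (abs_add_le x b).trans (by linarith [hxR x hx])
    rw [Real.norm_eq_abs]
    nlinarith [abs_sub_abs_le_abs_sub (φ (x + b)) (φ 0)]
  have hint_φ' : ∀ b : ℝ, Integrable (fun x => deriv φ (x + b)) ϑ := by
    intro b
    refine ⟨(hφ'c.comp (continuous_id.add continuous_const)).aestronglyMeasurable, ?_⟩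
    refine HasFiniteIntegral.of_bounded (C := C) (ae_of_all _ fun x => ?_)
    rw [Real.norm_eq_abs]; exact hC _
  -- the two key functions of the shift parameter
  set G : ℝ → ℝ := fun b => ∫ x, φ (x + b) ∂ϑ with hGdef
  set G' : ℝ → ℝ := fun b => ∫ x, deriv φ (x + b) ∂ϑ with hG'def
  have hG : ∀ b : ℝ, HasDerivAt G (G' b) b := by
    intro b
    refine (hasDerivAt_integral_of_dominated_loc_of_deriv_le (μ := ϑ)
      (F := fun b x => φ (x + b)) (F' := fun b x => deriv φ (x + b)) (x₀ := b)
      (bound := fun _ => C) (s := ball b 1) (ball_mem_nhds b one_pos)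
      (Eventually.of_forall fun c =>
        (hφc.comp (continuous_id.add continuous_const)).aestronglyMeasurable)
      (hint_φ_all b)
      ((hφ'c.comp (continuous_id.add continuous_const)).aestronglyMeasurable)
      (ae_of_all _ fun x c _ => by rw [Real.norm_eq_abs]; exact hC _)
      (integrable_const C)
      (ae_of_all _ fun x c _ => ?_)).2
    exact ((hφd (x + c)).hasDerivAt.comp c ((hasDerivAt_id c).const_add x)).congr_deriv (mul_one _)
  -- rewriting the integrals
  have hrw : ∀ (ψ : ℝ → ℝ), Continuous ψ → ∀ t : ℝ,
      ∫ x, ψ x ∂μ t = Real.exp (-a t) * ∫ x, ψ (x + a t) ∂ϑ := by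
    intro ψ hψ t
    rw [hμ t, integral_smul_measure,
      integral_map (by fun_prop) hψ.aestronglyMeasurable,
      ENNReal.toReal_ofReal (Real.exp_nonneg _), smul_eq_mul]
  -- integrability of the control
  have hu_int : IntegrableOn u (Icc (0:ℝ) 1) volume := by
    refine Integrable.mono' (integrable_const 1) hu_meas.aestronglyMeasurable.restrict ?_
    rw [ae_restrict_iff' measurableSet_Icc]
    exact ae_of_all _ fun t ht => by
      rw [Real.norm_eq_abs]; exact abs_le.mpr ⟨(hu_bdd t ht).1, (hu_bdd t ht).2⟩
  have h01 : (0:ℝ) ∈ Icc (0:ℝ) 1 := ⟨le_rfl, zero_le_one⟩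
  have hu_ii : ∀ s ∈ Icc (0:ℝ) 1, ∀ t ∈ Icc (0:ℝ) 1, IntervalIntegrable u volume s t := by
    intro s hs t ht
    exact (hu_int.mono_set (uIcc_subset_Icc hs ht)).intervalIntegrable
  have ha_sub : ∀ s ∈ Icc (0:ℝ) 1, ∀ t ∈ Icc (0:ℝ) 1, a t - a s = ∫ r in s..t, u r := by
    intro s hs t ht
    rw [ha t, ha s]
    exact intervalIntegral.integral_interval_sub_left (hu_ii 0 h01 t ht) (hu_ii 0 h01 s hs)
  have ha_diff_le : ∀ s ∈ Icc (0:ℝ) 1, ∀ t ∈ Icc (0:ℝ) 1, |a t - a s| ≤ |t - s| := by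
    intro s hs t ht
    rw [ha_sub s hs t ht]
    have h := intervalIntegral.norm_integral_le_of_norm_le_const (C := 1) (f := u)
      (a := s) (b := t) ?_
    · simpa using h
    · intro x hx
      have hx' : x ∈ Icc (0:ℝ) 1 := uIcc_subset_Icc hs ht (uIoc_subset_uIcc hx)
      rw [Real.norm_eq_abs]
      exact abs_le.mpr ⟨(hu_bdd x hx').1, (hu_bdd x hx').2⟩
  have ha_maps : MapsTo a (Icc (0:ℝ) 1) (Icc (-1:ℝ) 1) := by
    intro t ht
    have h0 : a 0 = 0 := by rw [ha]; simp
    have h := ha_diff_le 0 h01 t ht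
    rw [h0, sub_zero, sub_zero] at h
    have ht1 : |t| ≤ 1 := abs_le.mpr ⟨by linarith [ht.1], ht.2⟩
    exact abs_le.mp (h.trans ht1)
  have ha_lip : LipschitzOnWith 1 a (Icc (0:ℝ) 1) := by
    refine LipschitzOnWith.of_dist_le_mul fun s hs t ht => ?_
    rw [Real.dist_eq, Real.dist_eq]
    simpa using ha_diff_le t ht s hs
  -- bounds on G, G'
  set V : ℝ := (ϑ univ).toReal with hVdef
  have hV0 : 0 ≤ V := ENNReal.toReal_nonneg
  have hGbd : ∀ b : ℝ, |b| ≤ 1 → |G b| ≤ M * V := by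
    intro b hb
    have h := norm_integral_le_of_norm_le_const (μ := ϑ) (C := M)
      (f := fun x => φ (x + b)) ?_
    · simpa [Real.norm_eq_abs, measureReal_def] using h
    · filter_upwards [hK_ae] with x hx
      rw [Real.norm_eq_abs]; exact hφbd b hb x hx
  have hG'bd : ∀ b : ℝ, |G' b| ≤ C * V := by
    intro b
    have h := norm_integral_le_of_norm_le_const (μ := ϑ) (C := C)
      (f := fun x => deriv φ (x + b)) (ae_of_all _ fun x => by
        rw [Real.norm_eq_abs]; exact hC _)
    simpa [Real.norm_eq_abs, measureReal_def] using h
  have hM0 : 0 ≤ M := by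
    rw [hM]; positivity
  set L₀ : ℝ := Real.exp 1 * (M * V + C * V) with hL₀
  have hL₀0 : 0 ≤ L₀ := by positivity
  have hF : ∀ b : ℝ, HasDerivAt (fun b => Real.exp (-b) * G b)
      (Real.exp (-b) * -1 * G b + Real.exp (-b) * G' b) b := by
    intro b
    have h1 : HasDerivAt (fun b : ℝ => Real.exp (-b)) (Real.exp (-b) * -1) b := by
      exact ((Real.hasDerivAt_exp (-b)).comp b (hasDerivAt_neg b)).congr_deriv (by ring)
    exact h1.mul (hG b)
  have hFlip : LipschitzOnWith L₀.toNNReal (fun b => Real.exp (-b) * G b) (Icc (-1:ℝ) 1) := by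
    refine Convex.lipschitzOnWith_of_nnnorm_hasDerivWithin_le
      (f' := fun b => Real.exp (-b) * -1 * G b + Real.exp (-b) * G' b) (convex_Icc _ _)
      (fun b _ => (hF b).hasDerivWithinAt) fun b hb => ?_
    rw [← NNReal.coe_le_coe, coe_nnnorm, Real.coe_toNNReal _ hL₀0, Real.norm_eq_abs]
    have he : Real.exp (-b) ≤ Real.exp 1 := Real.exp_le_exp.2 (by linarith [hb.1])
    have he0 : (0:ℝ) < Real.exp (-b) := Real.exp_pos _
    have hb1 : |b| ≤ 1 := abs_le.mpr ⟨hb.1, hb.2⟩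
    have e1 : |Real.exp (-b) * -1 * G b| = Real.exp (-b) * |G b| := by
      rw [abs_mul, abs_mul, abs_neg, abs_one, mul_one, abs_of_pos he0]
    have e2 : |Real.exp (-b) * G' b| = Real.exp (-b) * |G' b| := by
      rw [abs_mul, abs_of_pos he0]
    calc |Real.exp (-b) * -1 * G b + Real.exp (-b) * G' b|
        ≤ |Real.exp (-b) * -1 * G b| + |Real.exp (-b) * G' b| := abs_add_le _ _
      _ = Real.exp (-b) * |G b| + Real.exp (-b) * |G' b| := by rw [e1, e2]
      _ ≤ Real.exp 1 * (M * V) + Real.exp 1 * (C * V) := by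
          refine add_le_add (mul_le_mul he (hGbd b hb1) (abs_nonneg _) (Real.exp_pos 1).le)
            (mul_le_mul he (hG'bd b) (abs_nonneg _) (Real.exp_pos 1).le)
      _ = L₀ := by rw [hL₀]; ring
  have hfun : (fun t => ∫ x, φ x ∂μ t) = fun t => Real.exp (-a t) * G (a t) :=
    funext fun t => hrw φ hφc t
  constructor
  · refine ⟨L₀.toNNReal * 1, ?_⟩
    rw [hfun]
    exact hFlip.comp ha_lip ha_maps
  · -- the a.e. derivative
    have hv_int : Integrable ((Icc (0:ℝ) 1).indicator u) volume :=
      hu_int.integrable_indicator measurableSet_Icc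
    have hftc := ftc_ae _ hv_int
    have hends : (volume : Measure ℝ) ({0, 1} : Set ℝ) = 0 :=
      Set.Countable.measure_zero (Set.countable_insert.2 (Set.countable_singleton 1)) _
    rw [ae_restrict_iff' measurableSet_Icc]
    filter_upwards [hftc, measure_eq_zero_iff_ae_notMem.mp hends] with t hftc_t hne ht
    simp only [mem_insert_iff, mem_singleton_iff, not_or] at hne
    have htIoo : t ∈ Ioo (0:ℝ) 1 :=
      ⟨lt_of_le_of_ne ht.1 (Ne.symm hne.1), lt_of_le_of_ne ht.2 hne.2⟩
    set A : ℝ → ℝ := fun s => ∫ r in (0:ℝ)..s, (Icc (0:ℝ) 1).indicator u r with hAdef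
    have hAa : ∀ s ∈ Icc (0:ℝ) 1, a s = A s := by
      intro s hs
      rw [ha s, hAdef]
      refine intervalIntegral.integral_congr fun r hr => ?_
      exact (indicator_of_mem (uIcc_subset_Icc h01 hs hr) u).symm
    have haA : a =ᶠ[𝓝 t] A := by
      filter_upwards [isOpen_Ioo.mem_nhds htIoo] with s hs
      exact hAa s (Ioo_subset_Icc_self hs)
    have hat : HasDerivAt a (u t) t := by
      have h1 : HasDerivAt A ((Icc (0:ℝ) 1).indicator u t) t := hftc_t
      rw [indicator_of_mem ht] at h1
      exact h1.congr_of_eventuallyEq haA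
    have hGa : HasDerivAt (fun s => G (a s)) (G' (a t) * u t) t := (hG (a t)).comp t hat
    have hexp : HasDerivAt (fun s => Real.exp (-a s)) (Real.exp (-a t) * -1 * u t) t := by
      have h := (Real.hasDerivAt_exp (-a t)).comp t hat.neg
      exact h.congr_deriv (by ring)
    have hprod := hexp.mul hGa
    rw [hfun]
    refine hprod.congr_deriv ?_
    rw [hrw φ hφc t, hrw (deriv φ) hφ'c t]
    ring
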